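/- For every N ≥ 4, the real vector space of permutation-equivariant linear maps from Matrix (Fin N) (Fin N) ℝ to Matrix (Fin N) (Fin N) ℝ has dimension exactly 15. -/

import Mathlib

/-- Action of a permutation on square matrices: `(σ • T) i j = T (σ⁻¹ i) (σ⁻¹ j)`. -/
def permAct {N : ℕ} (σ : Equiv.Perm (Fin N)) (T : Matrix (Fin N) (Fin N) ℝ) :
    Matrix (Fin N) (Fin N) ℝ :=
  Matrix.of fun i j => T (σ⁻¹ i) (σ⁻¹ j)

/-- The subspace of permutation-equivariant linear endomorphisms of N×N matrices. -/
noncomputable def EquivariantMaps (N : ℕ) :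
    Submodule ℝ (Matrix (Fin N) (Fin N) ℝ →ₗ[ℝ] Matrix (Fin N) (Fin N) ℝ) where
  carrier := {L | ∀ (σ : Equiv.Perm (Fin N)) (T : Matrix (Fin N) (Fin N) ℝ),
    L (permAct σ T) = permAct σ (L T)}
  add_mem' := by
    intro a b ha hb σ T
    simp only [LinearMap.add_apply, ha σ T, hb σ T]
    ext i j
    simp [permAct]
  zero_mem' := by
    intro σ T
    ext i j
    simp [permAct]
  smul_mem' := by
    intro c a ha σ T
    simp only [LinearMap.smul_apply, ha σ T]
    ext i j
    simp [permAct]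

namespace EqvAux

open Matrix Finset

/-- Equality pattern of a quadruple. -/
def pat {N : ℕ} (q : Fin 4 → Fin N) : Fin 4 → Fin 4 → Bool :=
  fun i j => decide (q i = q j)

lemma pat_eq_iff {N M : ℕ} (u : Fin 4 → Fin N) (v : Fin 4 → Fin M) :
    pat u = pat v ↔ ∀ i j, (u i = u j ↔ v i = v j) := by
  constructor
  · intro h i j
    have := congrFun (congrFun h i) j
    simpa [pat, decide_eq_decide] using this
  · intro h
    funext i j
    simp [pat, decide_eq_decide, h i j]

lemma exists_perm {N : ℕ} (u v : Fin 4 → Fin N) (h : pat u = pat v) :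
    ∃ σ : Equiv.Perm (Fin N), ∀ i, σ (v i) = u i := by
  classical
  rw [pat_eq_iff] at h
  have hmem : ∀ x : {x // x ∈ Finset.image v Finset.univ}, ∃ i, v i = x.1 := by
    intro x
    obtain ⟨i, -, hi⟩ := Finset.mem_image.mp x.2
    exact ⟨i, hi⟩
  let f : {x // x ∈ Finset.image v Finset.univ} → {x // x ∈ Finset.image u Finset.univ} :=
    fun x => ⟨u (hmem x).choose, Finset.mem_image.mpr ⟨_, Finset.mem_univ _, rfl⟩⟩
  have hf : ∀ x, v (hmem x).choose = x.1 := fun x => (hmem x).choose_spec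
  have hbij : Function.Bijective f := by
    constructor
    · intro x y hxy
      have h1 : u (hmem x).choose = u (hmem y).choose := congrArg Subtype.val hxy
      have h2 := (h _ _).mp h1
      exact Subtype.ext (by rw [← hf x, ← hf y, h2])
    · rintro ⟨y, hy⟩
      obtain ⟨i, -, rfl⟩ := Finset.mem_image.mp hy
      refine ⟨⟨v i, Finset.mem_image.mpr ⟨i, Finset.mem_univ _, rfl⟩⟩, ?_⟩
      apply Subtype.ext
      show u _ = u i
      exact (h _ _).mpr (hf _)
  let e := Equiv.ofBijective f hbij
  refine ⟨e.extendSubtype, fun i => ?_⟩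
  have hvi : v i ∈ Finset.image v Finset.univ :=
    Finset.mem_image.mpr ⟨i, Finset.mem_univ _, rfl⟩
  rw [Equiv.extendSubtype_apply_of_mem e (v i) hvi]
  show u _ = u i
  exact (h _ _).mpr (hf ⟨v i, hvi⟩)

/-- Canonicalization of a quadruple: first index with the same value (as ite chain). -/
def canon {N : ℕ} (q : Fin 4 → Fin N) : Fin 4 → Fin 4 :=
  fun i => if q 0 = q i then 0 else if q 1 = q i then 1 else if q 2 = q i then 2 else 3

lemma q_canon {N : ℕ} (q : Fin 4 → Fin N) (i : Fin 4) : q (canon q i) = q i := by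
  unfold canon
  split_ifs with h0 h1 h2
  · exact h0
  · exact h1
  · exact h2
  · fin_cases i
    · exact absurd rfl h0
    · exact absurd rfl h1
    · exact absurd rfl h2
    · rfl

lemma pat_canon {N : ℕ} (q : Fin 4 → Fin N) : pat (canon q) = pat q := by
  rw [pat_eq_iff]
  intro i j
  constructor
  · intro h
    rw [← q_canon q i, ← q_canon q j, h]
  · intro h
    simp only [canon, h]

/-- Patterns realizable by quadruples. -/
def PatSet : Finset (Fin 4 → Fin 4 → Bool) := Finset.image (pat (N := 4)) Finset.univ

lemma pat_mem {N : ℕ} (q : Fin 4 → Fin N) : pat q ∈ PatSet :=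
  Finset.mem_image.mpr ⟨canon q, Finset.mem_univ _, pat_canon q⟩

set_option maxRecDepth 10000 in
lemma card_PatSet : PatSet.card = 15 := by decide

lemma pat_comp_perm {N : ℕ} (σ : Equiv.Perm (Fin N)) (q : Fin 4 → Fin N) :
    pat (σ ∘ q) = pat q := by
  rw [pat_eq_iff]
  intro i j
  exact σ.injective.eq_iff (a := q i) (b := q j)

variable {N : ℕ} (hN : 4 ≤ N)

/-- Chosen representative quadruple of a pattern. -/
noncomputable def rep (p : {p // p ∈ PatSet}) : Fin 4 → Fin N :=
  Fin.castLE hN ∘ (Finset.mem_image.mp p.2).choose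

lemma pat_rep (p : {p // p ∈ PatSet}) : pat (rep hN p) = p.1 := by
  have hc := (Finset.mem_image.mp p.2).choose_spec.2
  rw [← hc]
  rw [pat_eq_iff]
  intro i j
  show Fin.castLE hN _ = Fin.castLE hN _ ↔ _
  exact Fin.castLE_inj

/-- The equivariant map built from pattern coefficients. -/
noncomputable def Lg (g : {p // p ∈ PatSet} → ℝ) :
    Matrix (Fin N) (Fin N) ℝ →ₗ[ℝ] Matrix (Fin N) (Fin N) ℝ where
  toFun T := Matrix.of fun i j => ∑ k, ∑ l, g ⟨pat ![i, j, k, l], pat_mem _⟩ * T k l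
  map_add' T S := by
    ext i j
    simp [mul_add, Finset.sum_add_distrib]
  map_smul' c T := by
    ext i j
    simp [Finset.mul_sum, mul_left_comm]

lemma comp_vec {N M : ℕ} (f : Fin N → Fin M) (i j k l : Fin N) :
    (![f i, f j, f k, f l] : Fin 4 → Fin M) = f ∘ ![i, j, k, l] := by
  funext a
  fin_cases a <;> simp

lemma Lg_equivariant (g : {p // p ∈ PatSet} → ℝ) : Lg g ∈ EquivariantMaps N := by
  intro σ T
  ext i j
  show (∑ k, ∑ l, g ⟨pat ![i, j, k, l], pat_mem _⟩ * (permAct σ T) k l)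
      = (Lg g T) (σ⁻¹ i) (σ⁻¹ j)
  have hT : ∀ k l : Fin N, (permAct σ T) k l = T (σ⁻¹ k) (σ⁻¹ l) := fun _ _ => rfl
  simp only [hT]
  show _ = ∑ k, ∑ l, g ⟨pat ![σ⁻¹ i, σ⁻¹ j, k, l], pat_mem _⟩ * T k l
  refine Fintype.sum_equiv σ⁻¹ _ _ fun k => ?_
  refine Fintype.sum_equiv σ⁻¹ _ _ fun l => ?_
  have hp : pat ![i, j, k, l] = pat ![σ⁻¹ i, σ⁻¹ j, σ⁻¹ k, σ⁻¹ l] := by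
    rw [comp_vec (⇑σ⁻¹), pat_comp_perm σ⁻¹]
  rw [show (⟨pat ![i, j, k, l], pat_mem _⟩ : {p // p ∈ PatSet})
      = ⟨pat ![σ⁻¹ i, σ⁻¹ j, σ⁻¹ k, σ⁻¹ l], pat_mem _⟩ from Subtype.ext hp]

/-- Coefficient-extraction map. -/
noncomputable def Phi : ↥(EquivariantMaps N) →ₗ[ℝ] ({p // p ∈ PatSet} → ℝ) where
  toFun L := fun p => (L.1 (single (rep hN p 2) (rep hN p 3) (1 : ℝ)))
      (rep hN p 0) (rep hN p 1)
  map_add' L L' := by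
    funext p
    simp [Matrix.add_apply]
  map_smul' c L := by
    funext p
    simp

/-- Reconstruction map. -/
noncomputable def Gamma : ({p // p ∈ PatSet} → ℝ) →ₗ[ℝ] ↥(EquivariantMaps N) where
  toFun g := ⟨Lg g, Lg_equivariant g⟩
  map_add' g g' := by
    apply Subtype.ext
    apply LinearMap.ext
    intro T
    ext i j
    show ∑ k, ∑ l, (g ⟨pat ![i, j, k, l], pat_mem _⟩ + g' ⟨pat ![i, j, k, l], pat_mem _⟩) * T k l
        = (∑ k, ∑ l, g ⟨pat ![i, j, k, l], pat_mem _⟩ * T k l)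
          + (∑ k, ∑ l, g' ⟨pat ![i, j, k, l], pat_mem _⟩ * T k l)
    simp [add_mul, Finset.sum_add_distrib]
  map_smul' c g := by
    apply Subtype.ext
    apply LinearMap.ext
    intro T
    ext i j
    show ∑ k, ∑ l, (c * g ⟨pat ![i, j, k, l], pat_mem _⟩) * T k l
        = c * ∑ k, ∑ l, g ⟨pat ![i, j, k, l], pat_mem _⟩ * T k l
    simp [Finset.mul_sum, mul_assoc]

lemma Phi_Gamma (g : {p // p ∈ PatSet} → ℝ) (p : {p // p ∈ PatSet}) :
    Phi hN (Gamma g) p = g p := by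
  show (∑ k, ∑ l, g ⟨pat ![rep hN p 0, rep hN p 1, k, l], pat_mem _⟩ *
      single (rep hN p 2) (rep hN p 3) (1 : ℝ) k l) = g p
  rw [Fintype.sum_eq_single (rep hN p 2) (fun k hk => ?_)]
  · rw [Fintype.sum_eq_single (rep hN p 3) (fun l hl => ?_)]
    · rw [show single (rep hN p 2) (rep hN p 3) (1 : ℝ)
          (rep hN p 2) (rep hN p 3) = 1 by simp [Matrix.single], mul_one]
      congr 1
      apply Subtype.ext
      show pat ![rep hN p 0, rep hN p 1, rep hN p 2, rep hN p 3] = p.1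
      rw [show (![rep hN p 0, rep hN p 1, rep hN p 2, rep hN p 3] : Fin 4 → Fin N) = rep hN p
          from by funext a; fin_cases a <;> rfl]
      exact pat_rep hN p
    · rw [show single (rep hN p 2) (rep hN p 3) (1 : ℝ) (rep hN p 2) l = 0 by
        simp [Matrix.single, Ne.symm hl], mul_zero]
  · apply Finset.sum_eq_zero
    intro l _
    rw [show single (rep hN p 2) (rep hN p 3) (1 : ℝ) k l = 0 by
      simp [Matrix.single, Ne.symm hk], mul_zero]

lemma permAct_apply {N : ℕ} (σ : Equiv.Perm (Fin N)) (M : Matrix (Fin N) (Fin N) ℝ)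
    (x y : Fin N) : permAct σ M (σ x) (σ y) = M x y := by
  show M (σ⁻¹ (σ x)) (σ⁻¹ (σ y)) = M x y
  simp

lemma permAct_stdBasisMatrix {N : ℕ} (σ : Equiv.Perm (Fin N)) (a b : Fin N) :
    permAct σ (single a b (1 : ℝ)) = single (σ a) (σ b) 1 := by
  ext x y
  show single a b (1 : ℝ) (σ⁻¹ x) (σ⁻¹ y) = single (σ a) (σ b) (1 : ℝ) x y
  simp only [Matrix.single, Matrix.of_apply]
  congr 1
  simp only [eq_iff_iff]
  constructor
  · rintro ⟨h1, h2⟩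
    exact ⟨by rw [h1]; simp, by rw [h2]; simp⟩
  · rintro ⟨h1, h2⟩
    exact ⟨by rw [← h1]; simp, by rw [← h2]; simp⟩

lemma coeff_eq (L : ↥(EquivariantMaps N)) (i j k l : Fin N) :
    Phi hN L ⟨pat ![i, j, k, l], pat_mem _⟩ = (L.1 (single k l (1 : ℝ))) i j := by
  obtain ⟨σ, hσ⟩ := exists_perm ![i, j, k, l] (rep hN ⟨pat ![i, j, k, l], pat_mem _⟩)
    (pat_rep hN ⟨pat ![i, j, k, l], pat_mem _⟩).symm
  set r := rep hN ⟨pat ![i, j, k, l], pat_mem _⟩ with hr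
  have h0 : σ (r 0) = i := hσ 0
  have h1 : σ (r 1) = j := hσ 1
  have h2 : σ (r 2) = k := hσ 2
  have h3 : σ (r 3) = l := hσ 3
  have key : (L.1 (single (σ (r 2)) (σ (r 3)) (1 : ℝ))) (σ (r 0)) (σ (r 1))
      = (L.1 (single (r 2) (r 3) (1 : ℝ))) (r 0) (r 1) := by
    rw [← permAct_stdBasisMatrix, L.2 σ, permAct_apply]
  show (L.1 (single (r 2) (r 3) (1 : ℝ))) (r 0) (r 1) = _
  rw [← key, h0, h1, h2, h3]

lemma Gamma_Phi (L : ↥(EquivariantMaps N)) : Gamma (Phi hN L) = L := by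
  apply Subtype.ext
  apply LinearMap.ext
  intro T
  have hT : L.1 T = ∑ k, ∑ l, T k l • L.1 (single k l (1 : ℝ)) := by
    conv_lhs => rw [matrix_eq_sum_single T, map_sum]
    refine Finset.sum_congr rfl fun k _ => ?_
    rw [map_sum]
    refine Finset.sum_congr rfl fun l _ => ?_
    rw [show single k l (T k l) = T k l • single k l (1 : ℝ) by
      rw [smul_single, smul_eq_mul, mul_one], LinearMap.map_smul]
  ext i j
  show ∑ k, ∑ l, Phi hN L ⟨pat ![i, j, k, l], pat_mem _⟩ * T k l = L.1 T i j
  rw [hT]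
  rw [Matrix.sum_apply, ]
  refine Finset.sum_congr rfl fun k _ => ?_
  rw [Matrix.sum_apply]
  refine Finset.sum_congr rfl fun l _ => ?_
  rw [coeff_eq hN L i j k l, Matrix.smul_apply, smul_eq_mul, mul_comm]

/-- The full linear equivalence. -/
noncomputable def equivE : ↥(EquivariantMaps N) ≃ₗ[ℝ] ({p // p ∈ PatSet} → ℝ) :=
  LinearEquiv.ofLinear (Phi hN) (Gamma)
    (by apply LinearMap.ext; intro g; funext p; exact Phi_Gamma hN g p)
    (by apply LinearMap.ext; intro L; exact Gamma_Phi hN L)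

end EqvAux

/-- For N ≥ 4, the space of permutation-equivariant linear maps from N×N matrices
to N×N matrices has dimension exactly 15. -/
theorem finrank_equivariantMaps (N : ℕ) (hN : 4 ≤ N) :
    Module.finrank ℝ ↥(EquivariantMaps N) = 15 := by
  rw [(EqvAux.equivE hN).finrank_eq, Module.finrank_fintype_fun_eq_card,
    Fintype.card_coe, EqvAux.card_PatSet]
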